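/- Let Y_0, Y_1, …, Y_k be k+1 independent and identically distributed real-valued random variables on a common probability space, and let 1 ≤ r ≤ k be an integer. For each index i ∈ {0, …, k}, let Q_i denote the r-th order statistic (r-th smallest value) of the k variables {Y_j : j ≠ i}. Then the probability Pr[Y_i > Q_i] is the same for all indices i, and consequently Pr[Y_0 > Q_0] ≤ (k + 1 − r)/(k + 1). -/

import Mathlib

open MeasureTheory ProbabilityTheory
open scoped ENNReal

/-- The `r`-th smallest value (1-indexed) of a list of reals, counted with
multiplicity. -/
noncomputable def rthSmallest (r : ℕ) (l : List ℝ) : ℝ :=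
  (l.insertionSort (· ≤ ·)).getD (r - 1) 0

lemma sorted_getD_lt_iff (a : ℝ) :
    ∀ (s : List ℝ), s.Pairwise (· ≤ ·) → ∀ m : ℕ, m < s.length →
      (s.getD m 0 < a ↔ m + 1 ≤ s.countP (fun y => decide (y < a))) := by
  intro s
  induction s with
  | nil => intro _ m hm; simp at hm
  | cons x t ih =>
    intro hs m hm
    have hxt : ∀ y ∈ t, x ≤ y := fun y hy => (List.pairwise_cons.mp hs).1 y hy
    have hts : t.Pairwise (· ≤ ·) := (List.pairwise_cons.mp hs).2
    rcases m with _ | n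
    · simp only [List.getD_cons_zero, List.countP_cons]
      by_cases hx : x < a
      · simp [hx]
      · have h0 : t.countP (fun y => decide (y < a)) = 0 := by
          rw [List.countP_eq_zero]
          intro y hy
          simp only [decide_eq_true_eq]
          exact not_lt.mpr (le_trans (not_lt.mp hx) (hxt y hy))
        simp [hx, h0]
    · have hn : n < t.length := by simpa using hm
      simp only [List.getD_cons_succ, List.countP_cons]
      by_cases hx : x < a
      · have hite : (if decide (x < a) = true then 1 else 0) = 1 := by simp [hx]
        rw [hite, ih hts n hn]
        omega
      · have h0 : t.countP (fun y => decide (y < a)) = 0 := by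
          rw [List.countP_eq_zero]
          intro y hy
          simp only [decide_eq_true_eq]
          exact not_lt.mpr (le_trans (not_lt.mp hx) (hxt y hy))
        have hLHS : ¬ t.getD n 0 < a := by
          have hmem : t.getD n 0 ∈ t := by
            rw [List.getD_eq_getElem t 0 hn]
            exact List.getElem_mem hn
          exact not_lt.mpr (le_trans (not_lt.mp hx) (hxt _ hmem))
        have hite : (if decide (x < a) = true then 1 else 0) = 0 := by simp [hx]
        rw [hite, h0]
        simp only [Nat.add_zero]
        constructor
        · intro h; exact absurd h (by exact_mod_cast hLHS)
        · omega

lemma sorted_count_le :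
    ∀ (s : List ℝ), s.Pairwise (· ≤ ·) → ∀ m : ℕ, m < s.length →
      m + 1 ≤ s.countP (fun y => decide (y ≤ s.getD m 0)) := by
  intro s
  induction s with
  | nil => intro _ m hm; simp at hm
  | cons x t ih =>
    intro hs m hm
    have hxt : ∀ y ∈ t, x ≤ y := fun y hy => (List.pairwise_cons.mp hs).1 y hy
    have hts : t.Pairwise (· ≤ ·) := (List.pairwise_cons.mp hs).2
    rcases m with _ | n
    · simp [List.countP_cons]
    · have hn : n < t.length := by simpa using hm
      have hxle : x ≤ t.getD n 0 := by
        have hmem : t.getD n 0 ∈ t := by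
          rw [List.getD_eq_getElem t 0 hn]
          exact List.getElem_mem hn
        exact hxt _ hmem
      have := ih hts n hn
      have hite : (if decide (x ≤ t.getD n 0) = true then 1 else 0) = 1 :=
        if_pos (decide_eq_true hxle)
      simp only [List.getD_cons_succ, List.countP_cons]
      rw [hite]
      omega

lemma rthSmallest_lt_iff (r : ℕ) (hr1 : 1 ≤ r) (l : List ℝ) (hrl : r ≤ l.length) (a : ℝ) :
    rthSmallest r l < a ↔ r ≤ l.countP (fun y => decide (y < a)) := by
  have hperm : (l.insertionSort (· ≤ ·)).Perm l := List.perm_insertionSort _ l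
  have hlen : (l.insertionSort (· ≤ ·)).length = l.length := hperm.length_eq
  have hsorted : (l.insertionSort (· ≤ ·)).Pairwise (· ≤ ·) :=
    List.pairwise_insertionSort _ l
  have hm : r - 1 < (l.insertionSort (· ≤ ·)).length := by omega
  rw [rthSmallest, ← hperm.countP_eq]
  have := sorted_getD_lt_iff a _ hsorted (r - 1) hm
  rw [this]
  omega

lemma countP_ofFn' : ∀ (n : ℕ) (x : Fin n → ℝ) (p : ℝ → Bool),
    (List.ofFn x).countP p = (Finset.univ.filter (fun j => p (x j) = true)).card := by
  intro n
  induction n with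
  | zero => intro x p; simp
  | succ n ih =>
    intro x p
    rw [List.ofFn_succ, List.countP_cons, Fin.card_filter_univ_succ' (fun j => p (x j) = true),
      ih (fun j => x j.succ) p]
    by_cases h : p (x 0) = true <;> simp [h] <;> omega

lemma perm_getElem_cons_eraseIdx {α : Type*} (l : List α) (i : ℕ) (h : i < l.length) :
    l.Perm (l[i] :: l.eraseIdx i) := by
  rw [List.eraseIdx_eq_take_drop_succ]
  conv_lhs => rw [← List.take_append_drop i l, List.drop_eq_getElem_cons h]
  exact List.perm_middle

open Finset in
lemma countP_eraseIdx_ofFn {n : ℕ} (x : Fin n → ℝ) (i : Fin n) (p : ℝ → Bool) :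
    ((List.ofFn x).eraseIdx i).countP p
      = (Finset.univ.filter (fun j => j ≠ i ∧ p (x j) = true)).card := by
  classical
  have hi : (i : ℕ) < (List.ofFn x).length := by simpa using i.isLt
  have hperm := perm_getElem_cons_eraseIdx (List.ofFn x) i hi
  have hget : (List.ofFn x)[(i : ℕ)] = x i := by simp
  have h1 : (List.ofFn x).countP p
      = (if p (x i) = true then 1 else 0) + ((List.ofFn x).eraseIdx i).countP p := by
    rw [hperm.countP_eq p, List.countP_cons, hget]
    omega
  have h2 := countP_ofFn' n x p
  have h3 : (Finset.univ.filter (fun j => p (x j) = true)).card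
      = (if p (x i) = true then 1 else 0)
        + (Finset.univ.filter (fun j => j ≠ i ∧ p (x j) = true)).card := by
    rw [Finset.card_filter, Finset.card_filter,
      ← Finset.add_sum_erase Finset.univ (fun j => if p (x j) = true then 1 else 0)
        (Finset.mem_univ i),
      ← Finset.add_sum_erase Finset.univ (fun j => if j ≠ i ∧ p (x j) = true then 1 else 0)
        (Finset.mem_univ i)]
    have hii : (if i ≠ i ∧ p (x i) = true then 1 else 0) = 0 := by simp
    rw [hii]
    have hsc : ∀ j ∈ Finset.univ.erase i,
        (if j ≠ i ∧ p (x j) = true then 1 else 0) = (if p (x j) = true then 1 else 0) := by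
      intro j hj
      have hji : j ≠ i := Finset.ne_of_mem_erase hj
      simp [hji]
    rw [Finset.sum_congr rfl hsc]
    omega
  omega

lemma exceed_iff_card {k : ℕ} (r : ℕ) (hr1 : 1 ≤ r) (hrk : r ≤ k)
    (x : Fin (k + 1) → ℝ) (i : Fin (k + 1)) :
    rthSmallest r ((List.ofFn x).eraseIdx i) < x i ↔
      r ≤ (Finset.univ.filter (fun j => j ≠ i ∧ x j < x i)).card := by
  classical
  have hlen : ((List.ofFn x).eraseIdx i).length = k := by
    have hi : (i : ℕ) < (List.ofFn x).length := by simpa using i.isLt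
    have := List.length_eraseIdx_add_one hi
    simp only [List.length_ofFn] at this
    omega
  rw [rthSmallest_lt_iff r hr1 _ (by omega) (x i),
    countP_eraseIdx_ofFn x i (fun y => decide (y < x i))]
  congr! 2
  ext j
  simp

lemma card_exceed_le {k r : ℕ} (hr1 : 1 ≤ r) (hrk : r ≤ k) (x : Fin (k + 1) → ℝ) :
    (Finset.univ.filter (fun i =>
        r ≤ (Finset.univ.filter (fun j => j ≠ i ∧ x j < x i)).card)).card ≤ k + 1 - r := by
  classical
  set t : ℝ := rthSmallest r (List.ofFn x) with ht
  have hlen : (List.ofFn x).length = k + 1 := by simp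
  -- any index in the filter satisfies t < x i
  have hsubset : (Finset.univ.filter (fun i =>
        r ≤ (Finset.univ.filter (fun j => j ≠ i ∧ x j < x i)).card))
      ⊆ Finset.univ.filter (fun i => t < x i) := by
    intro i hi
    rw [Finset.mem_filter] at hi ⊢
    refine ⟨Finset.mem_univ i, ?_⟩
    have hcard : r ≤ (List.ofFn x).countP (fun y => decide (y < x i)) := by
      rw [countP_ofFn']
      refine le_trans hi.2 (Finset.card_le_card ?_)
      intro j hj
      rw [Finset.mem_filter] at hj ⊢
      exact ⟨Finset.mem_univ j, by simpa using hj.2.2⟩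
    exact (rthSmallest_lt_iff r hr1 (List.ofFn x) (by omega) (x i)).mpr hcard
  -- at least r values are ≤ t
  have hle : r ≤ (List.ofFn x).countP (fun y => decide (y ≤ t)) := by
    set s := (List.ofFn x).insertionSort (· ≤ ·) with hsdef
    have hperm : s.Perm (List.ofFn x) := List.perm_insertionSort _ _
    have hslen : s.length = k + 1 := by rw [hperm.length_eq, hlen]
    have hts : t = s.getD (r - 1) 0 := rfl
    have := sorted_count_le s (List.pairwise_insertionSort _ _) (r - 1) (by omega)
    rw [← hts] at this
    rw [← hperm.countP_eq]
    omega
  have hcount : (Finset.univ.filter (fun i => t < x i)).card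
      = (List.ofFn x).countP (fun y => decide (t < y)) := by
    rw [countP_ofFn']
    congr! 2
    simp
  have hsplit : (List.ofFn x).countP (fun y => decide (t < y))
      + (List.ofFn x).countP (fun y => decide (y ≤ t)) = k + 1 := by
    have h1 : (List.ofFn x).countP (fun y => ¬ decide (t < y))
        = (List.ofFn x).countP (fun y => decide (y ≤ t)) := by
      refine List.countP_congr fun y _ => ?_
      simp [not_lt]
    have := List.length_eq_countP_add_countP (fun y => decide (t < y)) (l := List.ofFn x)
    rw [hlen] at this
    omega
  have := Finset.card_le_card hsubset
  omega


/-- **Symmetry bound at the core of split conformal prediction.**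
Let `Y₀, …, Y_k` be `k+1` i.i.d. real random variables and `1 ≤ r ≤ k`.  For
each `i`, let `Q i` be the `r`-th order statistic of the `k` variables
`{Y j : j ≠ i}`.  Then `Pr[Y i > Q i]` is the same for all `i`, and
consequently `Pr[Y₀ > Q₀] ≤ (k + 1 - r)/(k + 1)`. -/
theorem leaveOneOut_exceedance_symmetry_bound
    {Ω : Type*} [MeasurableSpace Ω] (μ : Measure Ω) [IsProbabilityMeasure μ]
    (k : ℕ) (Y : Fin (k + 1) → Ω → ℝ)
    (hmeas : ∀ i, Measurable (Y i))
    (hindep : iIndepFun Y μ)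
    (hident : ∀ i j : Fin (k + 1), IdentDistrib (Y i) (Y j) μ μ)
    (r : ℕ) (hr1 : 1 ≤ r) (hrk : r ≤ k)
    (Q : Fin (k + 1) → Ω → ℝ)
    (hQ : ∀ i ω, Q i ω = rthSmallest r ((List.ofFn fun j => Y j ω).eraseIdx i)) :
    (∀ i i' : Fin (k + 1),
        μ {ω | Q i ω < Y i ω} = μ {ω | Q i' ω < Y i' ω}) ∧
      μ {ω | Q 0 ω < Y 0 ω} ≤
        ENNReal.ofReal (((k : ℝ) + 1 - r) / ((k : ℝ) + 1)) := by
  classical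
  set f : Ω → (Fin (k + 1) → ℝ) := fun ω j => Y j ω with hfdef
  have hf : Measurable f := measurable_pi_lambda _ (fun j => hmeas j)
  set ν : Measure ℝ := Measure.map (Y 0) μ with hν
  haveI hνprob : IsProbabilityMeasure ν :=
    Measure.isProbabilityMeasure_map (hmeas 0).aemeasurable
  have hjoint : Measure.map f μ = Measure.pi (fun _ => ν) := by
    refine (Measure.pi_eq fun s hs => ?_).symm
    rw [Measure.map_apply hf (MeasurableSet.univ_pi hs)]
    have hpre : f ⁻¹' Set.univ.pi s
        = ⋂ j ∈ (Finset.univ : Finset (Fin (k + 1))), Y j ⁻¹' s j := by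
      ext ω; simp [hfdef, Set.mem_pi]
    rw [hpre, hindep.measure_inter_preimage_eq_mul Finset.univ (fun j _ => hs j)]
    refine Finset.prod_congr rfl fun j _ => ?_
    rw [← Measure.map_apply (hmeas j) (hs j), (hident j 0).map_eq]
  set C : Fin (k + 1) → Set (Fin (k + 1) → ℝ) := fun i =>
    {x | r ≤ (Finset.univ.filter (fun j => j ≠ i ∧ x j < x i)).card} with hC
  have hCmeas : ∀ i, MeasurableSet (C i) := by
    intro i
    have hN : Measurable fun x : Fin (k + 1) → ℝ =>
        (Finset.univ.filter (fun j => j ≠ i ∧ x j < x i)).card := by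
      simp_rw [Finset.card_filter]
      refine Finset.measurable_sum _ fun j _ => ?_
      by_cases hj : j = i
      · have : (fun x : Fin (k + 1) → ℝ => if j ≠ i ∧ x j < x i then (1 : ℕ) else 0)
            = fun _ => 0 := by funext x; simp [hj]
        rw [this]; exact measurable_const
      · have hset : MeasurableSet {x : Fin (k + 1) → ℝ | j ≠ i ∧ x j < x i} := by
          have : {x : Fin (k + 1) → ℝ | j ≠ i ∧ x j < x i} = {x | x j < x i} := by
            ext x; simp [hj]
          rw [this]
          exact measurableSet_lt (measurable_pi_apply j) (measurable_pi_apply i)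
        exact Measurable.ite hset measurable_const measurable_const
    exact hN (by trivial)
  have hAC : ∀ i, {ω | Q i ω < Y i ω} = f ⁻¹' C i := by
    intro i; ext ω
    simp only [Set.mem_setOf_eq, Set.mem_preimage, hC, hQ]
    exact exceed_iff_card r hr1 hrk (fun j => Y j ω) i
  have hsym : ∀ i i' : Fin (k + 1),
      Measure.pi (fun _ : Fin (k + 1) => ν) (C i)
        = Measure.pi (fun _ => ν) (C i') := by
    intro i i'
    set σ := Equiv.swap i i' with hσ
    have hσi : σ i = i' := Equiv.swap_apply_left i i'
    set T : (Fin (k + 1) → ℝ) → (Fin (k + 1) → ℝ) := fun x => x ∘ σ with hT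
    have hTmeas : Measurable T :=
      measurable_pi_lambda _ fun b => measurable_pi_apply (σ b)
    have hmap : Measure.map T (Measure.pi fun _ : Fin (k + 1) => ν)
        = Measure.pi fun _ => ν := by
      refine (Measure.pi_eq fun s hs => ?_).symm
      rw [Measure.map_apply hTmeas (MeasurableSet.univ_pi hs)]
      have hpre : T ⁻¹' Set.univ.pi s = Set.univ.pi (fun b => s (σ.symm b)) := by
        ext x
        simp only [Set.mem_preimage, Set.mem_univ_pi, hT, Function.comp_apply]
        constructor
        · intro h b; simpa using h (σ.symm b)
        · intro h j; simpa using h (σ j)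
      rw [hpre, Measure.pi_pi]
      exact Equiv.prod_comp σ.symm (fun j => ν (s j))
    have hset : T ⁻¹' C i = C i' := by
      ext x
      simp only [Set.mem_preimage, hC, Set.mem_setOf_eq, hT, Function.comp_apply]
      have hcard : (Finset.univ.filter (fun j => j ≠ i ∧ x (σ j) < x (σ i))).card
          = (Finset.univ.filter (fun j => j ≠ i' ∧ x j < x i')).card := by
        refine Finset.card_equiv σ fun j => ?_
        simp only [Finset.mem_filter, Finset.mem_univ, true_and, hσi]
        constructor
        · rintro ⟨h1, h2⟩
          exact ⟨fun h => h1 (σ.injective (by rw [h, hσi])), h2⟩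
        · rintro ⟨h1, h2⟩
          exact ⟨fun h => h1 (by rw [h, hσi]), h2⟩
      rw [hcard]
    calc Measure.pi (fun _ : Fin (k + 1) => ν) (C i)
        = Measure.map T (Measure.pi fun _ => ν) (C i) := by rw [hmap]
      _ = Measure.pi (fun _ => ν) (T ⁻¹' C i) := Measure.map_apply hTmeas (hCmeas i)
      _ = Measure.pi (fun _ => ν) (C i') := by rw [hset]
  have hmeasC : ∀ i, μ {ω | Q i ω < Y i ω}
      = Measure.pi (fun _ : Fin (k + 1) => ν) (C i) := by
    intro i
    rw [hAC i, ← Measure.map_apply hf (hCmeas i), hjoint]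
  set P : Measure (Fin (k + 1) → ℝ) := Measure.pi (fun _ => ν) with hP
  haveI : IsProbabilityMeasure P := by rw [hP]; infer_instance
  have hsum : ∑ i : Fin (k + 1), P (C i) ≤ ((k + 1 - r : ℕ) : ℝ≥0∞) := by
    have h1 : ∀ i, P (C i) = ∫⁻ x, (C i).indicator 1 x ∂P :=
      fun i => (lintegral_indicator_one (hCmeas i)).symm
    calc ∑ i : Fin (k + 1), P (C i)
        = ∫⁻ x, ∑ i : Fin (k + 1), (C i).indicator 1 x ∂P := by
          rw [lintegral_finset_sum _ (fun i _ => measurable_one.indicator (hCmeas i))]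
          exact Finset.sum_congr rfl fun i _ => h1 i
      _ ≤ ∫⁻ _, ((k + 1 - r : ℕ) : ℝ≥0∞) ∂P := by
          refine lintegral_mono fun x => ?_
          have hcard := card_exceed_le hr1 hrk x
          have hsum_eq : ∑ i : Fin (k + 1), (C i).indicator 1 x
              = ((Finset.univ.filter (fun i => x ∈ C i)).card : ℝ≥0∞) := by
            rw [Finset.card_filter, Nat.cast_sum]
            refine Finset.sum_congr rfl fun i _ => ?_
            by_cases h : x ∈ C i <;> simp [h, Set.indicator]
          rw [hsum_eq]
          have hle : (Finset.univ.filter (fun i => x ∈ C i)).card ≤ k + 1 - r := by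
            simpa [hC, Set.mem_setOf_eq] using hcard
          exact Nat.cast_le.mpr hle
      _ = ((k + 1 - r : ℕ) : ℝ≥0∞) := by simp
  have hksum : ((k + 1 : ℕ) : ℝ≥0∞) * P (C 0) ≤ ((k + 1 - r : ℕ) : ℝ≥0∞) := by
    calc ((k + 1 : ℕ) : ℝ≥0∞) * P (C 0)
        = ∑ _i : Fin (k + 1), P (C 0) := by
          rw [Finset.sum_const, Finset.card_univ, Fintype.card_fin, nsmul_eq_mul]
      _ = ∑ i : Fin (k + 1), P (C i) :=
          Finset.sum_congr rfl fun i _ => hsym 0 i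
      _ ≤ _ := hsum
  refine ⟨fun i i' => by rw [hmeasC i, hmeasC i']; exact hsym i i', ?_⟩
  rw [hmeasC 0]
  have hdiv : ENNReal.ofReal (((k : ℝ) + 1 - r) / ((k : ℝ) + 1))
      = ((k + 1 - r : ℕ) : ℝ≥0∞) / ((k + 1 : ℕ) : ℝ≥0∞) := by
    rw [ENNReal.ofReal_div_of_pos (by positivity)]
    congr 1
    · rw [← ENNReal.ofReal_natCast (k + 1 - r)]
      congr 1
      rw [Nat.cast_sub (by omega)]
      push_cast; ring
    · rw [← ENNReal.ofReal_natCast (k + 1)]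
      congr 1
      push_cast; ring
  rw [hdiv, ENNReal.le_div_iff_mul_le (Or.inl (by simp)) (Or.inl (by simp)), mul_comm]
  exact hksum
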